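/- Let M > 0 and let η₀'(u) = 2/(4η₀(u) − (φ''(1)/2)u²) denote the derivative of the distinguished inner solution with φ''(1) < 0, so that η₀'(u) > 0 for u ≤ 0. For the inner equation dη/du = μ²(1+φ(1+μu)) / (1 + 2μ²η + φ(1+μu)(2μ²η − 1)) with φ C¹ satisfying φ(1+s) = 1 + (φ''(1)/2)s² + O(s³) for s ≤ 0, the quantity E₁ := 1 − φ(1+μu) + 2μ²(1+φ(1+μu))η evaluated at η = η₀(u) + Kμ M(u) equals 2μ²/η₀'(u) + 4Kμ³M(u) + g(u;μ), where g(u;μ) := −φ(1+μu) + 1 + (φ''(1)/2)(μu)² + 2μ²(φ(1+μu) − 1)(η₀(u) + KμM(u)) satisfies, for u ∈ [u*, −u₀] with |μu| ≤ 1 and some constant C independent of K, the bound |g(u;μ)| ≤ C|μu|³(1 + K|μu|²). -/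
import Mathlib


open Set

/-- Key algebraic identity and remainder bound in the isolating block for the
inner equation (C¹ case): E₁ evaluated at η = η₀ + KμM equals
2μ²/η₀' + 4Kμ³M + g(u;μ), and |g(u;μ)| ≤ C|μu|³(1 + K|μu|²) with C
independent of K. -/
theorem stmt16 (φ η₀ : ℝ → ℝ) (A : ℝ) (hA : A < 0)
    (hode : ∀ u ≤ (0:ℝ), HasDerivAt η₀ (2/(4 * η₀ u - (A/2) * u^2)) u)
    (hpos : ∀ u ≤ (0:ℝ), 0 < 2/(4 * η₀ u - (A/2) * u^2))
    (Cφ : ℝ) (hCφ : 0 < Cφ)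
    (hφ : ∀ s ∈ Set.Icc (-1:ℝ) 0, |φ (1 + s) - 1 - (A/2) * s^2| ≤ Cφ * |s|^3)
    (a Cη : ℝ) (ha : 1 < a) (hCη : 0 < Cη)
    (hη : ∀ u ≤ -a, |η₀ u| ≤ Cη * u^2) :
    (∀ (K μ u : ℝ) (M : ℝ → ℝ),
      1 - φ (1 + μ*u) + 2*μ^2*(1 + φ (1 + μ*u))*(η₀ u + K*μ*M u)
        = μ^2*(4*η₀ u - (A/2)*u^2) + 4*K*μ^3*M u +
          (-(φ (1 + μ*u)) + 1 + (A/2)*(μ*u)^2 +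
            2*μ^2*(φ (1 + μ*u) - 1)*(η₀ u + K*μ*M u))) ∧
    (∃ C : ℝ, 0 < C ∧ ∀ K ≥ (1:ℝ), ∀ μ > (0:ℝ), ∀ u₀ ≥ a, ∀ u ≤ -u₀, |μ*u| ≤ 1 →
      |(-(φ (1 + μ*u)) + 1 + (A/2)*(μ*u)^2 +
          2*μ^2*(φ (1 + μ*u) - 1)*(η₀ u + K*μ*(-(u^3))))|
        ≤ C * |μ*u|^3 * (1 + K * |μ*u|^2)) := by
  constructor
  · intro K μ u M; ring
  · refine ⟨Cφ + 2*(|A|/2 + Cφ)*Cη + 2*(|A|/2 + Cφ), by positivity, ?_⟩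
    intro K hK μ hμ u₀ hu₀ u hu hs
    have hua : u ≤ -a := le_trans hu (neg_le_neg hu₀)
    have hu0 : u < 0 := lt_of_le_of_lt hua (by linarith)
    have hxle : μ * u ≤ 0 := mul_nonpos_of_nonneg_of_nonpos hμ.le hu0.le
    have hxge : -1 ≤ μ * u := (abs_le.mp hs).1
    have h1 := hφ (μ*u) ⟨hxge, hxle⟩
    have h3 := hη u hua
    set x := μ * u with hxdef
    have hax : |x| = -x := abs_of_nonpos hxle
    have hax1 : |x| ≤ 1 := hs
    have hax0 : 0 ≤ |x| := abs_nonneg x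
    have hK0 : (0:ℝ) ≤ K := by linarith
    have hnu3 : (0:ℝ) ≤ -(u^3) := by nlinarith
    have hq : |φ (1+x) - 1| ≤ (|A|/2 + Cφ) * |x|^2 := by
      have he : φ (1+x) - 1 = (φ (1+x) - 1 - (A/2)*x^2) + (A/2)*x^2 := by ring
      have hx3 : |x|^3 ≤ |x|^2 := by nlinarith
      have h4 : |(A/2)*x^2| = (|A|/2) * |x|^2 := by
        rw [abs_mul, abs_div, abs_pow]; norm_num
      calc |φ (1+x) - 1| ≤ |(φ (1+x) - 1 - (A/2)*x^2)| + |(A/2)*x^2| := by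
            have h := abs_add_le (φ (1+x) - 1 - (A/2)*x^2) ((A/2)*x^2)
            simpa using h
        _ ≤ Cφ * |x|^3 + (|A|/2) * |x|^2 := by rw [h4]; exact add_le_add h1 le_rfl
        _ ≤ (|A|/2 + Cφ) * |x|^2 := by nlinarith
    have hexpr : -(φ (1 + x)) + 1 + (A/2)*x^2 +
          2*μ^2*(φ (1 + x) - 1)*(η₀ u + K*μ*(-(u^3)))
        = -(φ (1+x) - 1 - (A/2)*x^2) + 2*μ^2*(φ (1+x) - 1)*(η₀ u + K*μ*(-(u^3))) := by
      ring
    rw [hexpr]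
    have habs2 : |K*μ*(-(u^3))| = K*μ*(-u)^3 := by
      rw [abs_of_nonneg (mul_nonneg (mul_nonneg hK0 hμ.le) hnu3)]; ring
    have hb1 : |η₀ u + K*μ*(-(u^3))| ≤ Cη * u^2 + K*μ*(-u)^3 := by
      calc |η₀ u + K*μ*(-(u^3))| ≤ |η₀ u| + |K*μ*(-(u^3))| := abs_add_le _ _
        _ ≤ Cη * u^2 + K*μ*(-u)^3 := by rw [habs2]; exact add_le_add h3 le_rfl
    have hrhs : 0 ≤ Cη * u^2 + K*μ*(-u)^3 := by
      have h5 : (0:ℝ) ≤ K*μ*(-u)^3 :=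
        mul_nonneg (mul_nonneg hK0 hμ.le) (pow_nonneg (by linarith) 3)
      have h6 : (0:ℝ) ≤ Cη * u^2 := mul_nonneg hCη.le (sq_nonneg u)
      linarith
    have key : |2*μ^2*(φ (1+x) - 1)*(η₀ u + K*μ*(-(u^3)))|
        ≤ 2*μ^2*((|A|/2 + Cφ) * |x|^2)*(Cη * u^2 + K*μ*(-u)^3) := by
      rw [abs_mul, abs_mul, abs_of_nonneg (by positivity : (0:ℝ) ≤ 2*μ^2)]
      exact mul_le_mul (mul_le_mul_of_nonneg_left hq (by positivity)) hb1
        (abs_nonneg _) (by positivity)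
    have hrw : 2*μ^2*((|A|/2 + Cφ) * |x|^2)*(Cη * u^2 + K*μ*(-u)^3)
        = 2*(|A|/2 + Cφ)*Cη*|x|^4 + 2*(|A|/2 + Cφ)*K*|x|^5 := by
      rw [hax, hxdef]; ring
    have hB : (0:ℝ) < |A|/2 + Cφ := by positivity
    have hax4 : |x|^4 ≤ |x|^3 := pow_le_pow_of_le_one hax0 hax1 (by norm_num)
    have t1 : 2*(|A|/2 + Cφ)*Cη*|x|^4 ≤ 2*(|A|/2 + Cφ)*Cη*|x|^3 :=
      mul_le_mul_of_nonneg_left hax4 (by positivity)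
    have t3 : (0:ℝ) ≤ 2*(|A|/2 + Cφ)*|x|^3 := by positivity
    have t4 : (0:ℝ) ≤ (Cφ + 2*(|A|/2 + Cφ)*Cη)*(K*|x|^5) := by positivity
    have expand : (Cφ + 2*(|A|/2 + Cφ)*Cη + 2*(|A|/2 + Cφ)) * |x|^3 * (1 + K * |x|^2)
        = (Cφ + 2*(|A|/2 + Cφ)*Cη + 2*(|A|/2 + Cφ)) * |x|^3
          + (Cφ + 2*(|A|/2 + Cφ)*Cη)*(K*|x|^5) + 2*(|A|/2 + Cφ)*K*|x|^5 := by ring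
    calc |(-(φ (1+x) - 1 - (A/2)*x^2)) + 2*μ^2*(φ (1+x) - 1)*(η₀ u + K*μ*(-(u^3)))|
        ≤ |(-(φ (1+x) - 1 - (A/2)*x^2))| + |2*μ^2*(φ (1+x) - 1)*(η₀ u + K*μ*(-(u^3)))| :=
          abs_add_le _ _
      _ ≤ Cφ * |x|^3 + (2*(|A|/2 + Cφ)*Cη*|x|^4 + 2*(|A|/2 + Cφ)*K*|x|^5) := by
          rw [abs_neg]; exact add_le_add h1 (le_of_le_of_eq key hrw)
      _ ≤ (Cφ + 2*(|A|/2 + Cφ)*Cη + 2*(|A|/2 + Cφ)) * |x|^3 * (1 + K * |x|^2) := by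
          rw [expand]; linarith
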